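/- If an orientation of V8 contains a directed cycle of length 6, then it also contains a directed cycle of length 4. -/

import Mathlib

/-- Adjacency in `V₈`, the four-rung Möbius ladder: `j` is adjacent to `j - 1`,
`j + 1` and `j + 4` (mod 8). -/
def V8Adj (i j : ZMod 8) : Prop := j = i + 1 ∨ i = j + 1 ∨ j = i + 4

/-- `E` is an orientation of `V₈`: for every pair of adjacent vertices exactly one
of the two arcs between them is present, and there are no arcs between non-adjacent
vertices. -/
def IsV8Orientation (E : ZMod 8 → ZMod 8 → Prop) : Prop :=
  (∀ i j, E i j → V8Adj i j) ∧ ∀ i j, V8Adj i j → (E i j ↔ ¬ E j i)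

/-- A directed cycle of length `k` in the digraph `E`. -/
def IsDirCycle {V : Type*} (E : V → V → Prop) (k : ℕ) (f : ZMod k → V) : Prop :=
  3 ≤ k ∧ Function.Injective f ∧ ∀ t : ZMod k, E (f t) (f (t + 1))

/-- The cycle `f` is induced: the only arcs between vertices of the cycle are the
consecutive arcs `f t → f (t+1)`. -/
def IsInducedDirCycle {V : Type*} (E : V → V → Prop) (k : ℕ) (f : ZMod k → V) : Prop :=
  ∀ s t : ZMod k, E (f s) (f t) → t = s + 1

/-- The cycle `f` is undominated: no vertex `u` outside the cycle has arcs to two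
distinct vertices of the cycle. -/
def IsUndominatedDirCycle {V : Type*} (E : V → V → Prop) (k : ℕ) (f : ZMod k → V) : Prop :=
  ∀ u : V, u ∉ Set.range f → ¬ ∃ s t : ZMod k, f s ≠ f t ∧ E u (f s) ∧ E u (f t)

/-! ### Auxiliary computational machinery

We encode an orientation of `V₈` by 12 booleans (8 rim edges, 4 chords) packed
into a 64-bit adjacency "bitboard" `A : ℕ`, where bit `8*u + v` means there is an
arc `u → v`.  Closed walks are detected by iterating the one-step successor map
on sets of vertices (also encoded as natural numbers).  The crucial finite check
(`v8key`) is carried out by `decide`. -/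

/-- Bitboard of the orientation encoded by the 12 booleans. -/
def v8buildA (b0 b1 b2 b3 b4 b5 b6 b7 c0 c1 c2 c3 : Bool) : ℕ :=
  (bif b0 then 2^1 else 2^8) |||
  (bif b1 then 2^10 else 2^17) |||
  (bif b2 then 2^19 else 2^26) |||
  (bif b3 then 2^28 else 2^35) |||
  (bif b4 then 2^37 else 2^44) |||
  (bif b5 then 2^46 else 2^53) |||
  (bif b6 then 2^55 else 2^62) |||
  (bif b7 then 2^56 else 2^7) |||
  (bif c0 then 2^4 else 2^32) |||
  (bif c1 then 2^13 else 2^41) |||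
  (bif c2 then 2^22 else 2^50) |||
  (bif c3 then 2^31 else 2^59)

/-- `v8orV g n = true` iff `g v = true` for some `v < n`. -/
def v8orV (g : ℕ → Bool) : ℕ → Bool :=
  Nat.rec false (fun v ih => g v || ih)

/-- Row `u` of the bitboard: the set of out-neighbours of `u`. -/
def v8row (A u : ℕ) : ℕ := (A >>> (8*u)) &&& 255

/-- Auxiliary loop for `v8step`. -/
def v8stepGo (A S : ℕ) : ℕ → ℕ → ℕ :=
  Nat.rec (fun acc => acc)
    (fun u ih acc => ih (bif S.testBit u then acc ||| v8row A u else acc))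

/-- One-step successor set of the vertex set `S` (the match forces evaluation). -/
def v8step (A : ℕ) : ℕ → ℕ :=
  Nat.rec 0 (fun S _ => v8stepGo A (S+1) 8 0)

/-- Iterated successor sets. -/
def v8iter (A : ℕ) : ℕ → ℕ → ℕ :=
  Nat.rec (fun S => S) (fun _ ih S => ih (v8step A S))

/-- `v8hasCl A k = true` iff there is a closed walk of length `k`. -/
def v8hasCl (A k : ℕ) : Bool := v8orV (fun s => (v8iter A k (1 <<< s)).testBit s) 8

/-- "Closed 6-walk implies closed 4-walk" for the bitboard `A`. -/
def v8good : ℕ → Bool :=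
  Nat.rec true (fun A _ => !v8hasCl (A+1) 6 || v8hasCl (A+1) 4)

set_option maxRecDepth 4000000 in
set_option maxHeartbeats 64000000 in
/-- The finite verification over all `2¹²` orientations of `V₈`. -/
lemma v8key : ∀ b0 b1 b2 b3 b4 b5 b6 b7 c0 c1 c2 c3 : Bool,
    v8good (v8buildA b0 b1 b2 b3 b4 b5 b6 b7 c0 c1 c2 c3) = true := by
  decide

/-! ### Semantics of the computational machinery -/

lemma v8orV_true {g : ℕ → Bool} {n : ℕ} :
    v8orV g n = true ↔ ∃ v, v < n ∧ g v = true := by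
  induction n with
  | zero => simp [v8orV]
  | succ n ih =>
    rw [show v8orV g (n+1) = (g n || v8orV g n) from rfl, Bool.or_eq_true, ih]
    constructor
    · rintro (h | ⟨v, hv, h⟩)
      exacts [⟨n, by omega, h⟩, ⟨v, by omega, h⟩]
    · rintro ⟨v, hv, h⟩
      rcases Nat.lt_succ_iff_lt_or_eq.mp hv with h' | rfl
      exacts [Or.inr ⟨v, h', h⟩, Or.inl h]

lemma v8row_tb (A u v : ℕ) (hv : v < 8) :
    (v8row A u).testBit v = A.testBit (8*u+v) := by
  rw [v8row, show (255 : ℕ) = 2^8 - 1 by norm_num, Nat.testBit_and,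
    Nat.testBit_shiftRight, Nat.testBit_two_pow_sub_one]
  simp [hv]

lemma v8stepGo_tb (A S : ℕ) : ∀ n acc (v : ℕ), v < 8 →
    ((v8stepGo A S n acc).testBit v = true ↔
      acc.testBit v = true ∨ ∃ u, u < n ∧ S.testBit u = true ∧ A.testBit (8*u+v) = true) := by
  intro n
  induction n with
  | zero =>
    intro acc v hv
    rw [show v8stepGo A S 0 acc = acc from rfl]
    simp
  | succ n ih =>
    intro acc v hv
    rw [show v8stepGo A S (n+1) acc
        = v8stepGo A S n (bif S.testBit n then acc ||| v8row A n else acc) from rfl,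
      ih _ v hv]
    cases hS : S.testBit n with
    | false =>
      simp only [cond_false]
      constructor
      · rintro (h | ⟨u, hu, h1, h2⟩)
        exacts [Or.inl h, Or.inr ⟨u, by omega, h1, h2⟩]
      · rintro (h | ⟨u, hu, h1, h2⟩)
        · exact Or.inl h
        · have : u < n := by
            rcases Nat.lt_succ_iff_lt_or_eq.mp hu with h' | rfl
            · exact h'
            · rw [hS] at h1; exact absurd h1 (by simp)
          exact Or.inr ⟨u, this, h1, h2⟩
    | true =>
      simp only [cond_true, Nat.testBit_or, Bool.or_eq_true, v8row_tb A n v hv]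
      constructor
      · rintro ((h | h) | ⟨u, hu, h1, h2⟩)
        exacts [Or.inl h, Or.inr ⟨n, by omega, hS, h⟩, Or.inr ⟨u, by omega, h1, h2⟩]
      · rintro (h | ⟨u, hu, h1, h2⟩)
        · exact Or.inl (Or.inl h)
        · rcases Nat.lt_succ_iff_lt_or_eq.mp hu with h' | rfl
          · exact Or.inr ⟨u, h', h1, h2⟩
          · exact Or.inl (Or.inr h2)

lemma v8step_tb (A S : ℕ) (v : ℕ) (hv : v < 8) :
    ((v8step A S).testBit v = true ↔
      ∃ u, u < 8 ∧ S.testBit u = true ∧ A.testBit (8*u+v) = true) := by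
  cases S with
  | zero =>
    rw [show v8step A 0 = 0 from rfl]
    simp [Nat.zero_testBit]
  | succ S =>
    rw [show v8step A (S+1) = v8stepGo A (S+1) 8 0 from rfl, v8stepGo_tb A (S+1) 8 0 v hv]
    simp [Nat.zero_testBit]

/-- Propositional walks of length `d` from `u` to `v` along the bitboard `A`. -/
def V8Walk (A : ℕ) : ℕ → ℕ → ℕ → Prop
  | 0, u, v => u = v
  | d+1, u, v => ∃ w, w < 8 ∧ A.testBit (8*u+w) = true ∧ V8Walk A d w v

lemma v8iter_tb (A : ℕ) : ∀ d S (v : ℕ), v < 8 →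
    ((v8iter A d S).testBit v = true ↔
      ∃ u, u < 8 ∧ S.testBit u = true ∧ V8Walk A d u v) := by
  intro d
  induction d with
  | zero =>
    intro S v hv
    rw [show v8iter A 0 S = S from rfl]
    constructor
    · exact fun h => ⟨v, hv, h, rfl⟩
    · rintro ⟨u, _, h, hw⟩
      rw [show V8Walk A 0 u v = (u = v) from rfl] at hw
      exact hw ▸ h
  | succ d ih =>
    intro S v hv
    rw [show v8iter A (d+1) S = v8iter A d (v8step A S) from rfl, ih _ v hv]
    constructor
    · rintro ⟨w, hw, hbit, hwalk⟩
      rcases (v8step_tb A S w hw).mp hbit with ⟨u, hu, hSu, hA⟩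
      exact ⟨u, hu, hSu, w, hw, hA, hwalk⟩
    · rintro ⟨u, hu, hSu, w, hw, hA, hwalk⟩
      exact ⟨w, hw, (v8step_tb A S w hw).mpr ⟨u, hu, hSu, hA⟩, hwalk⟩

lemma v8shift_tb (s u : ℕ) : ((1 <<< s : ℕ).testBit u = true) ↔ u = s := by
  rw [Nat.shiftLeft_eq, one_mul, Nat.testBit_two_pow]
  simp [eq_comm]

lemma v8hasCl_tb (A k : ℕ) : v8hasCl A k = true ↔ ∃ s, s < 8 ∧ V8Walk A k s s := by
  rw [v8hasCl, v8orV_true]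
  constructor
  · rintro ⟨s, hs, h⟩
    rcases (v8iter_tb A k _ s hs).mp h with ⟨u, _, hbit, hw⟩
    rcases (v8shift_tb s u).mp hbit with rfl
    exact ⟨u, hs, hw⟩
  · rintro ⟨s, hs, hw⟩
    exact ⟨s, hs, (v8iter_tb A k _ s hs).mpr ⟨s, hs, (v8shift_tb s s).mpr rfl, hw⟩⟩

lemma v8good_eq (n : ℕ) : v8good n = (!v8hasCl n 6 || v8hasCl n 4) := by
  cases n with
  | zero => decide
  | succ n => rfl

/-! ### The bitboard attached to an orientation -/

instance (i j : ZMod 8) : Decidable (V8Adj i j) := by unfold V8Adj; infer_instance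

open Classical in
/-- `decide` with the classical instance. -/
noncomputable def v8d (E : ZMod 8 → ZMod 8 → Prop) (i j : ZMod 8) : Bool :=
  @decide (E i j) (Classical.propDecidable _)

/-- The bitboard of an orientation `E`. -/
noncomputable def v8A (E : ZMod 8 → ZMod 8 → Prop) : ℕ :=
  v8buildA (v8d E 0 1) (v8d E 1 2) (v8d E 2 3) (v8d E 3 4) (v8d E 4 5) (v8d E 5 6)
    (v8d E 6 7) (v8d E 7 0) (v8d E 0 4) (v8d E 1 5) (v8d E 2 6) (v8d E 3 7)

lemma v8cond_tb (b : Bool) (x y k : ℕ) :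
    (cond b x y).testBit k = cond b (x.testBit k) (y.testBit k) := by
  cases b <;> rfl

lemma v8bridge (E : ZMod 8 → ZMod 8 → Prop) (hE : IsV8Orientation E)
    (u v : ℕ) (hu : u < 8) (hv : v < 8) :
    ((v8A E).testBit (8*u+v) = true ↔ E (u : ZMod 8) (v : ZMod 8)) := by
  have flip : ∀ i j : ZMod 8, V8Adj j i → ((¬ E i j) ↔ E j i) :=
    fun i j adj => (hE.2 j i adj).symm
  have nonadj : ∀ i j : ZMod 8, ¬ V8Adj i j → (False ↔ E i j) :=
    fun i j h => iff_of_false (fun h' => h') (fun h' => h (hE.1 i j h'))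
  interval_cases u <;> interval_cases v <;>
    (rw [v8A, v8buildA]
     simp only [v8cond_tb, Nat.testBit_or, Nat.testBit_two_pow]
     norm_num [v8d]) <;>
    first
      | exact flip _ _ (by decide)
      | exact fun h => absurd (hE.1 _ _ h) (by decide)

/-- If an orientation of `V₈` contains a directed cycle of length 6, then it also
contains a directed cycle of length 4. -/
theorem v8_six_cycle_gives_four_cycle
    (E : ZMod 8 → ZMod 8 → Prop) (hE : IsV8Orientation E)
    (f : ZMod 6 → ZMod 8) (hf : IsDirCycle E 6 f) :
    ∃ g : ZMod 4 → ZMod 8, IsDirCycle E 4 g := by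
  classical
  obtain ⟨-, -, harc⟩ := hf
  have cv : ∀ x : ZMod 8, ((x.val : ℕ) : ZMod 8) = x := fun x => ZMod.natCast_rightInverse x
  have hbr : ∀ u v : ℕ, u < 8 → v < 8 → (((v8A E).testBit (8*u+v) = true) ↔ E ↑u ↑v) :=
    v8bridge E hE
  have hb : ∀ x y : ZMod 8, E x y → (v8A E).testBit (8*x.val + y.val) = true := by
    intro x y h
    exact (hbr _ _ (ZMod.val_lt x) (ZMod.val_lt y)).mpr (by rw [cv, cv]; exact h)
  have e0 : E (f 0) (f 1) := by have := harc 0; rwa [show (0:ZMod 6)+1 = 1 by decide] at this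
  have e1 : E (f 1) (f 2) := by have := harc 1; rwa [show (1:ZMod 6)+1 = 2 by decide] at this
  have e2 : E (f 2) (f 3) := by have := harc 2; rwa [show (2:ZMod 6)+1 = 3 by decide] at this
  have e3 : E (f 3) (f 4) := by have := harc 3; rwa [show (3:ZMod 6)+1 = 4 by decide] at this
  have e4 : E (f 4) (f 5) := by have := harc 4; rwa [show (4:ZMod 6)+1 = 5 by decide] at this
  have e5 : E (f 5) (f 0) := by have := harc 5; rwa [show (5:ZMod 6)+1 = 0 by decide] at this
  have h6 : v8hasCl (v8A E) 6 = true := by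
    rw [v8hasCl_tb]
    exact ⟨(f 0).val, ZMod.val_lt _,
      (f 1).val, ZMod.val_lt _, hb _ _ e0,
      (f 2).val, ZMod.val_lt _, hb _ _ e1,
      (f 3).val, ZMod.val_lt _, hb _ _ e2,
      (f 4).val, ZMod.val_lt _, hb _ _ e3,
      (f 5).val, ZMod.val_lt _, hb _ _ e4,
      (f 0).val, ZMod.val_lt _, hb _ _ e5, rfl⟩
  have hkey : v8good (v8A E) = true :=
    v8key (v8d E 0 1) (v8d E 1 2) (v8d E 2 3) (v8d E 3 4) (v8d E 4 5) (v8d E 5 6)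
      (v8d E 6 7) (v8d E 7 0) (v8d E 0 4) (v8d E 1 5) (v8d E 2 6) (v8d E 3 7)
  have h4 : v8hasCl (v8A E) 4 = true := by
    have hg := v8good_eq (v8A E)
    rw [hkey, h6] at hg
    simpa using hg.symm
  rw [v8hasCl_tb] at h4
  have h4' : ∃ s, s < 8 ∧ ∃ w1, w1 < 8 ∧ (v8A E).testBit (8*s+w1) = true ∧
      ∃ w2, w2 < 8 ∧ (v8A E).testBit (8*w1+w2) = true ∧
      ∃ w3, w3 < 8 ∧ (v8A E).testBit (8*w2+w3) = true ∧
      ∃ w4, w4 < 8 ∧ (v8A E).testBit (8*w3+w4) = true ∧ w4 = s := h4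
  obtain ⟨s, hs, w1, h1, a1, w2, h2, a2, w3, h3, a3, z, hz, a4, hzs⟩ := h4'
  rw [hzs] at a4
  have es1 : E ↑s ↑w1 := (hbr _ _ hs h1).mp a1
  have es2 : E ↑w1 ↑w2 := (hbr _ _ h1 h2).mp a2
  have es3 : E ↑w2 ↑w3 := (hbr _ _ h2 h3).mp a3
  have es4 : E (↑w3) (↑s : ZMod 8) := (hbr _ _ h3 hs).mp a4
  have noLoop : ∀ x : ZMod 8, ¬ E x x := by
    intro x hx
    rcases hE.1 x x hx with h | h | h
    · exact absurd (left_eq_add.mp h) (by decide)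
    · exact absurd (left_eq_add.mp h) (by decide)
    · exact absurd (left_eq_add.mp h) (by decide)
  have noDigon : ∀ x y : ZMod 8, E x y → E y x → False :=
    fun x y hxy hyx => (hE.2 x y (hE.1 x y hxy)).mp hxy hyx
  have d01 : (↑s : ZMod 8) ≠ ↑w1 := fun h => noLoop _ (h ▸ es1)
  have d12 : (↑w1 : ZMod 8) ≠ ↑w2 := fun h => noLoop _ (h ▸ es2)
  have d23 : (↑w2 : ZMod 8) ≠ ↑w3 := fun h => noLoop _ (h ▸ es3)
  have d30 : (↑w3 : ZMod 8) ≠ ↑s := fun h => noLoop _ (h ▸ es4)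
  have d02 : (↑s : ZMod 8) ≠ ↑w2 := fun h => noDigon _ _ es1 (h ▸ es2)
  have d13 : (↑w1 : ZMod 8) ≠ ↑w3 := fun h => noDigon _ _ es2 (h ▸ es3)
  refine ⟨![↑s, ↑w1, ↑w2, ↑w3], by norm_num, ?_, ?_⟩
  · intro a b hab
    fin_cases a <;> fin_cases b <;>
      simp_all <;> rfl
  · intro t
    fin_cases t
    · exact es1
    · exact es2
    · exact es3
    · exact es4
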